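/- Let N ≥ 1 be an integer, ψ ∈ (−π/2, π/2) and c > 0, and set z = i·c·e^{−iψ}. Then the function A ↦ Tr[(1_N − z·A)^{−2}] is absolutely integrable with respect to μ_G and |∫_{H_N} Tr[(1_N − z·A)^{−2}] dμ_G(A)| ≤ N/cos²ψ. Consequently, if λ, a ∈ ℂ ∖ {0} satisfy λ/a² = x·e^{−2iψ} with x > 0, then the trivial-tree LVE amplitude A_{T₁} = −(λ/a²)·(1/2)·∫_{H_N} Tr[(1_N − i·(√x/√N)·e^{−iψ}·A)^{−2}] dμ_G(A) satisfies |A_{T₁}| ≤ (N/2)·|λ/a²|·(1/cos²ψ). -/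

import Mathlib

open Matrix Complex MeasureTheory

noncomputable instance matrixMeasurableSpace (m n : Type*) : MeasurableSpace (Matrix m n ℂ) :=
  inferInstanceAs (MeasurableSpace (m → n → ℂ))

/-- `H_N`: the real vector space of `N × N` complex Hermitian matrices. -/
abbrev HermSpace (N : ℕ) : Type := ↥(selfAdjoint (Matrix (Fin N) (Fin N) ℂ))

/-- The (unnormalized) Gaussian density `exp(−(1/2) Tr A²)` on `H_N`. -/
noncomputable def gaussDensity (N : ℕ) (A : HermSpace N) : ENNReal :=
  ENNReal.ofReal (Real.exp (-(1 / 2) *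
    (((A : Matrix (Fin N) (Fin N) ℂ) * (A : Matrix (Fin N) (Fin N) ℂ)).trace).re))

/-- The Gaussian probability measure `μ_G` on `H_N`, built from an additive Haar
(Lebesgue) measure `ν` on `H_N`, normalized to total mass `1`. -/
noncomputable def gaussMeasure (N : ℕ) (ν : Measure (HermSpace N)) : Measure (HermSpace N) :=
  (∫⁻ A, gaussDensity N A ∂ν)⁻¹ • ν.withDensity (gaussDensity N)

-- scalar lower bound
lemma normSq_lower (ψ c t : ℝ) :
    Real.cos ψ ^ 2 ≤
      Complex.normSq (1 - (Complex.I * c * Complex.exp (-(ψ : ℂ) * Complex.I)) * t) := by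
  have h1 : Complex.exp (-(ψ : ℂ) * Complex.I) = Complex.cos ψ - Complex.sin ψ * Complex.I := by
    rw [Complex.exp_mul_I]
    simp [Complex.cos_neg, Complex.sin_neg, sub_eq_add_neg]
  rw [h1, Complex.normSq_apply]
  simp only [Complex.sub_re, Complex.sub_im, Complex.one_re, Complex.one_im, Complex.mul_re,
    Complex.mul_im, Complex.I_re, Complex.I_im, Complex.ofReal_re, Complex.ofReal_im,
    Complex.cos_ofReal_re, Complex.cos_ofReal_im, Complex.sin_ofReal_re, Complex.sin_ofReal_im]
  ring_nf
  nlinarith [Real.sin_sq_add_cos_sq ψ, sq_nonneg (c * t - Real.sin ψ), sq_nonneg (c * t), sq_nonneg (Real.sin ψ)]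

lemma trace_bound (N : ℕ) {ψ : ℝ} (hcos : 0 < Real.cos ψ) (c : ℝ) (A : HermSpace N) :
    ‖(((1 : Matrix (Fin N) (Fin N) ℂ)
        - (Complex.I * c * Complex.exp (-(ψ : ℂ) * Complex.I)) •
            (A : Matrix (Fin N) (Fin N) ℂ))⁻¹ ^ 2).trace‖ ≤ N / Real.cos ψ ^ 2 := by
  set z : ℂ := Complex.I * c * Complex.exp (-(ψ : ℂ) * Complex.I) with hz
  have hA : (A : Matrix (Fin N) (Fin N) ℂ).IsHermitian := A.property
  set U : Matrix (Fin N) (Fin N) ℂ := (hA.eigenvectorUnitary : Matrix (Fin N) (Fin N) ℂ) with hUdef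
  have hU1 : U * star U = 1 := (Matrix.mem_unitaryGroup_iff).mp hA.eigenvectorUnitary.2
  have hU2 : star U * U = 1 := (Matrix.mem_unitaryGroup_iff').mp hA.eigenvectorUnitary.2
  set d : Fin N → ℂ := fun i => 1 - z * (hA.eigenvalues i : ℂ) with hd
  have hdsq : ∀ i, Real.cos ψ ^ 2 ≤ Complex.normSq (d i) := fun i => normSq_lower ψ c _
  have hdne : ∀ i, d i ≠ 0 := by
    intro i h
    have := hdsq i
    rw [h, Complex.normSq_zero] at this
    nlinarith
  have hdiag : Matrix.diagonal d
      = 1 - z • Matrix.diagonal (RCLike.ofReal ∘ hA.eigenvalues) := by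
    rw [← Matrix.diagonal_one, ← Matrix.diagonal_smul, ← Matrix.diagonal_sub]
    rfl
  have key : (1 : Matrix (Fin N) (Fin N) ℂ) - z • (A : Matrix (Fin N) (Fin N) ℂ)
      = U * Matrix.diagonal d * star U := by
    conv_lhs => rw [hA.spectral_theorem, Unitary.conjStarAlgAut_apply]
    rw [← hUdef, hdiag, Matrix.mul_sub, Matrix.mul_one, Matrix.mul_smul, Matrix.sub_mul,
      hU1, Matrix.smul_mul]
  have hmul : ∀ e f : Fin N → ℂ, (U * Matrix.diagonal e * star U) * (U * Matrix.diagonal f * star U)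
      = U * Matrix.diagonal (fun i => e i * f i) * star U := by
    intro e f
    simp only [Matrix.mul_assoc]
    rw [← Matrix.mul_assoc (star U) U, hU2, Matrix.one_mul,
      ← Matrix.mul_assoc (Matrix.diagonal e), Matrix.diagonal_mul_diagonal]
  have hconj : ∀ e : Fin N → ℂ, (U * Matrix.diagonal e * star U).trace = ∑ i, e i := by
    intro e
    rw [Matrix.trace_mul_comm, ← Matrix.mul_assoc, hU2, Matrix.one_mul, Matrix.trace_diagonal]
  have hinv : (U * Matrix.diagonal d * star U)⁻¹
      = U * Matrix.diagonal (fun i => (d i)⁻¹) * star U := by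
    apply Matrix.inv_eq_left_inv
    rw [hmul]
    have : (fun i => (d i)⁻¹ * d i) = fun _ => (1 : ℂ) := funext fun i => inv_mul_cancel₀ (hdne i)
    rw [this, Matrix.diagonal_one, Matrix.mul_one, hU1]
  have hsq : (U * Matrix.diagonal (fun i => (d i)⁻¹) * star U) ^ 2
      = U * Matrix.diagonal (fun i => ((d i)⁻¹) ^ 2) * star U := by
    rw [sq, hmul]
    simp_rw [← sq]
  rw [key, hinv, hsq, hconj]
  have hterm : ∀ i : Fin N, ‖(d i)⁻¹ ^ 2‖ ≤ 1 / Real.cos ψ ^ 2 := by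
    intro i
    rw [norm_pow, norm_inv, inv_pow, one_div]
    have h1 : Real.cos ψ ^ 2 ≤ ‖d i‖ ^ 2 := by
      rw [Complex.sq_norm]
      exact hdsq i
    exact inv_anti₀ (by positivity) h1
  calc ‖∑ i, (d i)⁻¹ ^ 2‖ ≤ ∑ _i : Fin N, (1 / Real.cos ψ ^ 2) :=
        (norm_sum_le _ _).trans (Finset.sum_le_sum fun i _ => hterm i)
    _ = N / Real.cos ψ ^ 2 := by
        rw [Finset.sum_const, Finset.card_univ, Fintype.card_fin, nsmul_eq_mul]
        ring

instance matrixBorelSpace (N : ℕ) : BorelSpace (Matrix (Fin N) (Fin N) ℂ) :=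
  inferInstanceAs (BorelSpace (Fin N → Fin N → ℂ))

lemma meas_trace (N : ℕ) (z : ℂ) :
    Measurable fun A : HermSpace N =>
      ((((1 : Matrix (Fin N) (Fin N) ℂ) - z • (A : Matrix (Fin N) (Fin N) ℂ))⁻¹ ^ 2).trace) := by
  have hcoe : Measurable fun A : HermSpace N => (A : Matrix (Fin N) (Fin N) ℂ) :=
    measurable_subtype_coe
  set B : Matrix (Fin N) (Fin N) ℂ → Matrix (Fin N) (Fin N) ℂ :=
    fun M => (1 : Matrix (Fin N) (Fin N) ℂ) - z • M with hB
  have hBcont : Continuous B := by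
    apply Continuous.sub continuous_const
    exact continuous_id.const_smul z
  have hdet : Measurable fun M => (B M).det := ((continuous_id.matrix_det).comp hBcont).measurable
  have hadj : ∀ i j, Measurable fun M => (B M).adjugate i j := fun i j =>
    (((continuous_id.matrix_adjugate).comp hBcont).matrix_elem i j).measurable
  have hentry : ∀ i j, Measurable fun M => (B M)⁻¹ i j := by
    intro i j
    have : (fun M => (B M)⁻¹ i j) = fun M => ((B M).det)⁻¹ * (B M).adjugate i j := by
      funext M
      rw [Matrix.inv_def, Ring.inverse_eq_inv', Matrix.smul_apply, smul_eq_mul]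
    rw [this]
    exact (hdet.inv).mul (hadj i j)
  have htr : Measurable fun M => ((B M)⁻¹ ^ 2).trace := by
    have : (fun M => ((B M)⁻¹ ^ 2).trace)
        = fun M => ∑ i : Fin N, ∑ j : Fin N, (B M)⁻¹ i j * (B M)⁻¹ j i := by
      funext M
      rw [sq, Matrix.trace]
      simp [Matrix.diag, Matrix.mul_apply]
    rw [this]
    exact Finset.measurable_sum _ fun i _ =>
      Finset.measurable_sum _ fun j _ => (hentry i j).mul (hentry j i)
  exact htr.comp hcoe

lemma gaussMeasure_univ_le (N : ℕ) (ν : Measure (HermSpace N)) :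
    gaussMeasure N ν Set.univ ≤ 1 := by
  rw [gaussMeasure, Measure.smul_apply, smul_eq_mul,
    MeasureTheory.withDensity_apply _ MeasurableSet.univ, setLIntegral_univ]
  exact ENNReal.inv_mul_le_one _

lemma main_bound (N : ℕ) {ψ : ℝ} (hcos : 0 < Real.cos ψ) (c : ℝ)
    (ν : Measure (HermSpace N)) :
    Integrable (fun A : HermSpace N =>
        ((((1 : Matrix (Fin N) (Fin N) ℂ)
            - (Complex.I * c * Complex.exp (-(ψ : ℂ) * Complex.I)) •
                (A : Matrix (Fin N) (Fin N) ℂ))⁻¹ ^ 2).trace)) (gaussMeasure N ν) ∧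
      ‖∫ A : HermSpace N,
          ((((1 : Matrix (Fin N) (Fin N) ℂ)
              - (Complex.I * c * Complex.exp (-(ψ : ℂ) * Complex.I)) •
                  (A : Matrix (Fin N) (Fin N) ℂ))⁻¹ ^ 2).trace)
          ∂(gaussMeasure N ν)‖
        ≤ N / Real.cos ψ ^ 2 := by
  have hC : (0 : ℝ) ≤ N / Real.cos ψ ^ 2 := by positivity
  haveI : IsFiniteMeasure (gaussMeasure N ν) :=
    ⟨lt_of_le_of_lt (gaussMeasure_univ_le N ν) ENNReal.one_lt_top⟩
  have hmeas := (meas_trace N (Complex.I * c * Complex.exp (-(ψ : ℂ) * Complex.I))).aestronglyMeasurable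
    (μ := gaussMeasure N ν)
  have hbd : ∀ᵐ A : HermSpace N ∂(gaussMeasure N ν), ‖((((1 : Matrix (Fin N) (Fin N) ℂ)
      - (Complex.I * c * Complex.exp (-(ψ : ℂ) * Complex.I)) •
          (A : Matrix (Fin N) (Fin N) ℂ))⁻¹ ^ 2).trace)‖ ≤ N / Real.cos ψ ^ 2 :=
    ae_of_all _ fun A => trace_bound N hcos c A
  constructor
  · exact (integrable_const (N / Real.cos ψ ^ 2)).mono' hmeas hbd
  · calc ‖∫ A : HermSpace N, ((((1 : Matrix (Fin N) (Fin N) ℂ)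
          - (Complex.I * c * Complex.exp (-(ψ : ℂ) * Complex.I)) •
              (A : Matrix (Fin N) (Fin N) ℂ))⁻¹ ^ 2).trace) ∂(gaussMeasure N ν)‖
        ≤ (N / Real.cos ψ ^ 2) * ((gaussMeasure N ν) Set.univ).toReal :=
          norm_integral_le_of_norm_le_const hbd
      _ ≤ (N / Real.cos ψ ^ 2) * 1 := by
          apply mul_le_mul_of_nonneg_left _ hC
          have h := gaussMeasure_univ_le N ν
          calc ((gaussMeasure N ν) Set.univ).toReal ≤ (1 : ENNReal).toReal :=
                ENNReal.toReal_mono ENNReal.one_ne_top h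
            _ = 1 := ENNReal.toReal_one
      _ = N / Real.cos ψ ^ 2 := mul_one _

/-- With `z = i c e^{−iψ}` (`c > 0`, `ψ ∈ (−π/2, π/2)`), the function
`A ↦ Tr[(1 − zA)^{−2}]` is `μ_G`-integrable with `|∫ Tr[(1 − zA)^{−2}] dμ_G| ≤ N/cos²ψ`.
Consequently, if `λ, a ≠ 0` satisfy `λ/a² = x e^{−2iψ}` with `x > 0`, the trivial-tree LVE
amplitude `A_{T₁} = −(λ/a²)(1/2) ∫ Tr[(1 − i(√x/√N)e^{−iψ}A)^{−2}] dμ_G` satisfies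
`|A_{T₁}| ≤ (N/2)·|λ/a²|·(1/cos²ψ)`. -/
theorem trivial_tree_amplitude_bound (N : ℕ) (hN : 1 ≤ N)
    (ψ : ℝ) (hψ : ψ ∈ Set.Ioo (-(Real.pi / 2)) (Real.pi / 2)) (c : ℝ) (hc : 0 < c)
    (ν : Measure (HermSpace N)) (hν : ν.IsAddHaarMeasure) :
    (Integrable (fun A : HermSpace N =>
        ((((1 : Matrix (Fin N) (Fin N) ℂ)
            - (Complex.I * c * Complex.exp (-(ψ : ℂ) * Complex.I)) •
                (A : Matrix (Fin N) (Fin N) ℂ))⁻¹ ^ 2).trace)) (gaussMeasure N ν) ∧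
      ‖∫ A : HermSpace N,
          ((((1 : Matrix (Fin N) (Fin N) ℂ)
              - (Complex.I * c * Complex.exp (-(ψ : ℂ) * Complex.I)) •
                  (A : Matrix (Fin N) (Fin N) ℂ))⁻¹ ^ 2).trace)
          ∂(gaussMeasure N ν)‖
        ≤ N / Real.cos ψ ^ 2) ∧
    (∀ lam a : ℂ, lam ≠ 0 → a ≠ 0 → ∀ x : ℝ, 0 < x →
      lam / a ^ 2 = (x : ℂ) * Complex.exp (-(2 * ψ : ℂ) * Complex.I) →
      ‖-(lam / a ^ 2) * (1 / 2) *
          ∫ A : HermSpace N,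
            ((((1 : Matrix (Fin N) (Fin N) ℂ)
                - (Complex.I * ((Real.sqrt x / Real.sqrt N : ℝ) : ℂ) *
                    Complex.exp (-(ψ : ℂ) * Complex.I)) •
                    (A : Matrix (Fin N) (Fin N) ℂ))⁻¹ ^ 2).trace)
            ∂(gaussMeasure N ν)‖
        ≤ (N / 2) * ‖lam / a ^ 2‖ * (1 / Real.cos ψ ^ 2)) := by
  
  have hcos : 0 < Real.cos ψ := Real.cos_pos_of_mem_Ioo hψ
  refine ⟨main_bound N hcos c ν, ?_⟩
  intro lam a hlam ha x hx hrel
  have hbd := (main_bound N hcos (Real.sqrt x / Real.sqrt N) ν).2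
  rw [norm_mul, norm_mul, norm_neg]
  have h2 : ‖(1 / 2 : ℂ)‖ = 1 / 2 := by norm_num
  rw [h2]
  calc ‖lam / a ^ 2‖ * (1 / 2) *
        ‖∫ A : HermSpace N,
            ((((1 : Matrix (Fin N) (Fin N) ℂ)
                - (Complex.I * ((Real.sqrt x / Real.sqrt N : ℝ) : ℂ) *
                    Complex.exp (-(ψ : ℂ) * Complex.I)) •
                    (A : Matrix (Fin N) (Fin N) ℂ))⁻¹ ^ 2).trace)
            ∂(gaussMeasure N ν)‖
      ≤ ‖lam / a ^ 2‖ * (1 / 2) * (N / Real.cos ψ ^ 2) := by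
        apply mul_le_mul_of_nonneg_left hbd (by positivity)
    _ = (N / 2) * ‖lam / a ^ 2‖ * (1 / Real.cos ψ ^ 2) := by
        field_simp
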